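/- If b,f < 0 and bf − ce > 0, then the symmetric 2×2 matrix Q = [[2Ab, Ac+Be],[Ac+Be, 2Bf]] is negative definite for a suitable choice of A,B > 0. Specifically: if ce < 0 choose A/B = −e/c; if ce > 0 choose A/B = e/c; if ce = 0 (say e = 0) choose A/B sufficiently small. -/

import Mathlib

lemma quad_neg (α β γ : ℝ) (hα : α < 0) (h : β ^ 2 < 4 * α * γ) :
    ∀ x y : ℝ, (x ≠ 0 ∨ y ≠ 0) →
      2 * α * x ^ 2 + 2 * β * x * y + 2 * γ * y ^ 2 < 0 := by
  intro x y hxy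
  rcases eq_or_ne y 0 with hy | hy
  · subst hy
    rcases hxy with hx | hx
    · have hx2 : 0 < x ^ 2 := by positivity
      nlinarith
    · exact absurd rfl hx
  · have hy2 : 0 < y ^ 2 := by positivity
    nlinarith [sq_nonneg (2 * α * x + β * y)]

/-- **Negative definiteness of the matrix `Q`.**
If `b, f < 0` and `bf − ce > 0`, then for a suitable choice of `A, B > 0` the symmetric
matrix `Q = [[2Ab, Ac+Be], [Ac+Be, 2Bf]]` is negative definite (i.e. the associated
quadratic form is negative away from the origin).  Specifically, if `ce < 0` one may choose
`A/B = −e/c` (so `Ac + Be = 0`), and if `ce > 0` one may choose `A/B = e/c`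
(so `Ac − Be = 0`). -/
theorem Q_negative_definite
    (b c e f : ℝ) (hb : b < 0) (hf : f < 0) (hdet : 0 < b * f - c * e) :
    ∃ A B : ℝ, 0 < A ∧ 0 < B ∧
      (c * e < 0 → A * c + B * e = 0) ∧
      (0 < c * e → A * c - B * e = 0) ∧
      (∀ x y : ℝ, (x ≠ 0 ∨ y ≠ 0) →
        2 * A * b * x^2 + 2 * (A * c + B * e) * x * y + 2 * B * f * y^2 < 0) := by
  have hbf : 0 < b * f := mul_pos_of_neg_of_neg hb hf
  rcases lt_trichotomy (c * e) 0 with hce | hce | hce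
  · -- ce < 0: opposite signs
    rcases lt_trichotomy c 0 with hc | hc | hc
    · -- c < 0, hence e > 0
      have he : 0 < e := by nlinarith
      refine ⟨e, -c, he, by linarith, fun _ => by ring, fun h => absurd h (by linarith), ?_⟩
      intro x y hxy
      have := quad_neg (e * b) (e * c + (-c) * e) ((-c) * f)
        (mul_neg_of_pos_of_neg he hb) (by nlinarith) x y hxy
      linarith [this]
    · exfalso; simp [hc] at hce
    · -- c > 0, hence e < 0
      have he : e < 0 := by nlinarith
      refine ⟨-e, c, by linarith, hc, fun _ => by ring, fun h => absurd h (by linarith), ?_⟩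
      intro x y hxy
      have := quad_neg ((-e) * b) ((-e) * c + c * e) (c * f)
        (mul_neg_of_pos_of_neg (by linarith) hb) (by nlinarith) x y hxy
      linarith [this]
  · -- ce = 0
    rcases eq_or_ne c 0 with hc | hc
    · rcases eq_or_ne e 0 with he | he
      · -- c = e = 0
        refine ⟨1, 1, one_pos, one_pos, fun h => by simp [hc, he],
          fun h => by simp [hc, he], ?_⟩
        intro x y hxy
        have := quad_neg (1 * b) (1 * c + 1 * e) (1 * f) (by linarith)
          (by rw [hc, he]; nlinarith) x y hxy
        linarith [this]
      · -- c = 0, e ≠ 0; choose B = bf/e², A = 1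
        have he2 : 0 < e ^ 2 := by positivity
        refine ⟨1, b * f / e ^ 2 / 2, one_pos, by positivity,
          fun h => absurd hce h.ne,
          fun h => absurd hce h.ne', ?_⟩
        intro x y hxy
        set B := b * f / e ^ 2 / 2 with hB
        have hBpos : 0 < B := by positivity
        have hkey : (1 * c + B * e) ^ 2 < 4 * (1 * b) * (B * f) := by
          have : B * e ^ 2 = b * f / 2 := by rw [hB]; field_simp
          nlinarith [sq_nonneg (B * e)]
        have := quad_neg (1 * b) (1 * c + B * e) (B * f) (by linarith) hkey x y hxy
        linarith [this]
    · -- c ≠ 0, so e = 0; choose A = bf/c²/2, B = 1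
      have he : e = 0 := by
        rcases mul_eq_zero.mp hce with h | h
        · exact absurd h hc
        · exact h
      have hc2 : 0 < c ^ 2 := by positivity
      refine ⟨b * f / c ^ 2 / 2, 1, by positivity, one_pos,
        fun h => absurd hce h.ne,
        fun h => absurd hce h.ne', ?_⟩
      intro x y hxy
      set A := b * f / c ^ 2 / 2 with hA
      have hApos : 0 < A := by positivity
      have hkey : (A * c + 1 * e) ^ 2 < 4 * (A * b) * (1 * f) := by
        have : A * c ^ 2 = b * f / 2 := by rw [hA]; field_simp
        nlinarith [sq_nonneg (A * c)]
      have := quad_neg (A * b) (A * c + 1 * e) (1 * f)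
        (mul_neg_of_pos_of_neg hApos hb) hkey x y hxy
      linarith [this]
  · -- ce > 0: same signs
    rcases lt_trichotomy c 0 with hc | hc | hc
    · -- c < 0, e < 0
      have he : e < 0 := by nlinarith
      refine ⟨-e, -c, by linarith, by linarith, fun h => absurd h (by linarith),
        fun _ => by ring, ?_⟩
      intro x y hxy
      have := quad_neg ((-e) * b) ((-e) * c + (-c) * e) ((-c) * f)
        (mul_neg_of_pos_of_neg (by linarith) hb) (by nlinarith) x y hxy
      linarith [this]
    · exfalso; simp [hc] at hce
    · -- c > 0, e > 0
      have he : 0 < e := by nlinarith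
      refine ⟨e, c, he, hc, fun h => absurd h (by linarith), fun _ => by ring, ?_⟩
      intro x y hxy
      have := quad_neg (e * b) (e * c + c * e) (c * f)
        (mul_neg_of_pos_of_neg he hb) (by nlinarith) x y hxy
      linarith [this]
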